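/- arXiv:2207.02637 — 2 statements merged into one kernel-verified Lean document; each statement's English description precedes it below -/
import Mathlib

section
/- In the index-tracking product construction for GR(1) goals: given a trace α : ℕ → Set AP and predicates ψ_1..ψ_m, define the counter sequence ι : ℕ → Fin (m+1) by ι 0 = 0 and ι (n+1) = ι n + 1 (mod m+1) if ι n = 0 or ψ_{ι n} holds at α n, else ι (n+1) = ι n. Then ι takes value 0 infinitely often if and only if every ψ_l holds at infinitely many positions of α. -/
/-- Correctness of the index-tracking counter for a conjunction of GF conditions:
the counter `ι` (cycling through `0, 1, ..., m` modulo `m + 1`, advancing from `0`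
unconditionally and from `l ≥ 1` exactly when `ψ_l` holds at the current position)
resets to `0` infinitely often iff every `ψ_l` (`1 ≤ l ≤ m`) holds at infinitely many
positions of the trace `α`. -/
theorem counter_resets_iff_all_GF {AP : Type*} (m : ℕ) (hm : 1 ≤ m) (α : ℕ → Set AP)
    (ψ : ℕ → Set AP → Prop) (ι : ℕ → Fin (m + 1)) (h0 : ι 0 = 0)
    (hstep : ∀ t, ((ι t = 0 ∨ ψ (ι t : ℕ) (α t)) → ι (t + 1) = ι t + 1) ∧
      (¬(ι t = 0 ∨ ψ (ι t : ℕ) (α t)) → ι (t + 1) = ι t)) :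
    {t | ι t = 0}.Infinite ↔ ∀ l ∈ Finset.Icc 1 m, {t | ψ l (α t)}.Infinite := by
  have hone : (1 : Fin (m + 1)) ≠ 0 := by
    have h1 : ((1 : Fin (m + 1)) : ℕ) = 1 % (m + 1) := Fin.val_one' _
    intro h
    rw [h] at h1
    simp at h1
    omega
  constructor
  · -- zeros infinite → every ψ_l infinite
    intro hz l hl
    simp only [Finset.mem_Icc] at hl
    -- key lemma: if the counter has value in [1, l] at a and is 0 at b ≥ a,
    -- then it passes value l witnessing ψ_l somewhere in [a, b)
    have key : ∀ n a, 1 ≤ (ι a).val → (ι a).val ≤ l → ι (a + n) = 0 →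
        ∃ u, a ≤ u ∧ (ι u).val = l ∧ ψ l (α u) := by
      intro n
      induction n with
      | zero =>
        intro a h1 h2 hb
        simp only [Nat.add_zero] at hb
        rw [hb] at h1
        simp at h1
      | succ n ih =>
        intro a h1 h2 hb
        by_cases hc : ι a = 0 ∨ ψ ((ι a : ℕ)) (α a)
        · have hadv := (hstep a).1 hc
          have hψa : ψ ((ι a : ℕ)) (α a) := by
            rcases hc with hc | hc
            · rw [hc] at h1; simp at h1
            · exact hc
          by_cases heq : (ι a).val = l
          · exact ⟨a, le_refl a, heq, heq ▸ hψa⟩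
          · have hlt : (ι a).val < l := lt_of_le_of_ne h2 heq
            have hnl : ι a ≠ Fin.last m := by
              intro h
              rw [h] at hlt
              simp only [Fin.val_last] at hlt
              omega
            have hval : (ι (a + 1)).val = (ι a).val + 1 := by
              rw [hadv, Fin.val_add_one_of_lt]
              exact lt_of_le_of_ne (Fin.le_last _) hnl
            have hb' : ι (a + 1 + n) = 0 := by
              rw [show a + 1 + n = a + (n + 1) by ring]; exact hb
            obtain ⟨u, hu1, hu2, hu3⟩ := ih (a + 1) (by omega) (by omega) hb'
            exact ⟨u, by omega, hu2, hu3⟩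
        · have hsame := (hstep a).2 hc
          have hb' : ι (a + 1 + n) = 0 := by
            rw [show a + 1 + n = a + (n + 1) by ring]; exact hb
          obtain ⟨u, hu1, hu2, hu3⟩ := ih (a + 1) (by rw [hsame]; omega)
            (by rw [hsame]; omega) hb'
          exact ⟨u, by omega, hu2, hu3⟩
    apply Set.infinite_of_forall_exists_gt
    intro N
    obtain ⟨t0, ht0, hNt0⟩ := hz.exists_gt N
    have ht0' : ι (t0 + 1) = 1 := by
      have := (hstep t0).1 (Or.inl ht0)
      rw [this, ht0, zero_add]
    obtain ⟨t1, ht1, ht01⟩ := hz.exists_gt (t0 + 1)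
    have hval1 : (ι (t0 + 1)).val = 1 := by
      rw [ht0']; simp [Fin.val_one']; omega
    have hb : ι (t0 + 1 + (t1 - (t0 + 1))) = 0 := by
      rw [Nat.add_sub_cancel' (le_of_lt ht01)]; exact ht1
    obtain ⟨u, hu1, hu2, hu3⟩ := key (t1 - (t0 + 1)) (t0 + 1) (by omega) (by omega) hb
    exact ⟨u, hu3, by omega⟩
  · -- every ψ_l infinite → zeros infinite
    intro hψ
    -- the counter either stays at its current value forever, or eventually steps
    have sos : ∀ t, (∀ u, t ≤ u → ι u = ι t) ∨
        ∃ u, t ≤ u ∧ ι u = ι t ∧ ι (u + 1) = ι t + 1 := by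
      intro t
      by_cases h : ∃ u, t ≤ u ∧ ι u = ι t ∧ ι (u + 1) = ι t + 1
      · exact Or.inr h
      · push_neg at h
        left
        intro u hu
        induction u, hu using Nat.le_induction with
        | base => rfl
        | succ u hu ih =>
          by_cases hc : ι u = 0 ∨ ψ ((ι u : ℕ)) (α u)
          · have := (hstep u).1 hc
            rw [ih] at this
            exact absurd this (h u hu ih)
          · rw [(hstep u).2 hc, ih]
      -- end sos
    have key : ∀ k t, (m + 1) - (ι t).val ≤ k → ∃ s, t ≤ s ∧ ι s = 0 := by
      intro k
      induction k with
      | zero =>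
        intro t ht
        have := (ι t).isLt
        omega
      | succ k ih =>
        intro t ht
        by_cases h0t : ι t = 0
        · exact ⟨t, le_refl t, h0t⟩
        · rcases sos t with hstay | ⟨u, hu1, hu2, hu3⟩
          · -- stays forever at a nonzero value: contradicts ψ_{ι t} infinite
            exfalso
            have hval : 1 ≤ (ι t).val ∧ (ι t).val ≤ m := by
              have := (ι t).isLt
              constructor
              · rcases Nat.eq_zero_or_pos (ι t).val with h | h
                · exact absurd (Fin.ext h) h0t
                · exact h
              · omega
            have hmem : ((ι t : ℕ)) ∈ Finset.Icc 1 m := Finset.mem_Icc.mpr hval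
            obtain ⟨s, hs, hts⟩ := (hψ _ hmem).exists_gt t
            have hιs : ι s = ι t := hstay s (le_of_lt hts)
            have hψs : ψ ((ι s : ℕ)) (α s) := by rw [hιs]; exact hs
            have := (hstep s).1 (Or.inr hψs)
            rw [hιs, hstay (s + 1) (by omega)] at this
            exact hone (by
              have : ι t + 1 - ι t = ι t - ι t := by rw [← this]
              simpa using this)
          · -- steps to ι t + 1
            by_cases hlast : ι t = Fin.last m
            · refine ⟨u + 1, by omega, ?_⟩
              rw [hu3, hlast, Fin.last_add_one]
            · have hval : (ι (u + 1)).val = (ι t).val + 1 := by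
                rw [hu3, Fin.val_add_one_of_lt]
                exact lt_of_le_of_ne (Fin.le_last _) hlast
              obtain ⟨s, hs1, hs2⟩ := ih (u + 1) (by omega)
              exact ⟨s, by omega, hs2⟩
    apply Set.infinite_of_forall_exists_gt
    intro N
    obtain ⟨s, hs1, hs2⟩ := key (m + 1) (N + 1) (by omega)
    exact ⟨s, hs2, by omega⟩
end

section
/- Correctness of the cycle linear program for a single weight function: in a finite directed graph with weight w : V → ℤ, there exists a function x : E → ℕ with ∑_e x_e ≥ 1, flow conservation at every vertex (∑_{e out of v} x_e = ∑_{e into v} x_e), and ∑_e w(src e) * x_e ≥ 0, if and only if the graph contains a cycle whose total weight (sum of w over the cycle's vertices, with multiplicity) is nonnegative. -/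
open Finset

set_option linter.unusedSectionVars false

section AuxAll
variable {V E : Type*} [Fintype V] [Fintype E] [DecidableEq V]

section DE
variable [DecidableEq E]

lemma rot_sum {k : ℕ} (hk : 0 < k) {M : Type*} [AddCommMonoid M] (f : Fin k → M) :
    ∑ j : Fin k, f ⟨((j : ℕ) + 1) % k, Nat.mod_lt _ hk⟩ = ∑ j : Fin k, f j := by
  haveI : NeZero k := ⟨hk.ne'⟩
  have heq : (fun j : Fin k => (⟨((j : ℕ) + 1) % k, Nat.mod_lt _ hk⟩ : Fin k)) =
      fun j => j + ⟨1 % k, Nat.mod_lt _ hk⟩ := by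
    funext j
    apply Fin.ext
    show ((j : ℕ) + 1) % k = ((j : ℕ) + 1 % k) % k
    conv_lhs => rw [Nat.add_mod, Nat.mod_eq_of_lt j.isLt]
  have hbij : Function.Bijective
      (fun j : Fin k => (⟨((j : ℕ) + 1) % k, Nat.mod_lt _ hk⟩ : Fin k)) := by
    rw [heq]; exact (Equiv.addRight (⟨1 % k, Nat.mod_lt _ hk⟩ : Fin k)).bijective
  exact Fintype.sum_bijective _ hbij _ _ (fun j => rfl)

lemma cycle_total {k : ℕ} (c : Fin k → E) :
    ∑ e, (∑ j : Fin k, if c j = e then (1 : ℕ) else 0) = k := by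
  rw [Finset.sum_comm]
  have h : ∀ j : Fin k, ∑ e, (if c j = e then (1 : ℕ) else 0) = 1 := by
    intro j; rw [Finset.sum_ite_eq]; simp
  simp [h]

lemma filter_cycle_sum {k : ℕ} (c : Fin k → E) (p : E → Prop) [DecidablePred p] :
    ∑ e ∈ univ.filter p, (∑ j : Fin k, if c j = e then (1 : ℕ) else 0) =
      ∑ j : Fin k, if p (c j) then 1 else 0 := by
  rw [Finset.sum_filter]
  have h : ∀ e, (if p e then (∑ j : Fin k, if c j = e then (1 : ℕ) else 0) else 0) =
      ∑ j : Fin k, if c j = e then (if p e then (1 : ℕ) else 0) else 0 := by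
    intro e; split_ifs with h <;> simp [h]
  simp_rw [h]
  rw [Finset.sum_comm]
  refine Finset.sum_congr rfl fun j _ => ?_
  rw [Finset.sum_ite_eq]; simp

lemma cycle_wsum {k : ℕ} (c : Fin k → E) (f : E → ℤ) :
    ∑ e, f e * ((∑ j : Fin k, if c j = e then (1 : ℕ) else 0 : ℕ) : ℤ) =
      ∑ j : Fin k, f (c j) := by
  have h : ∀ e, ((∑ j : Fin k, if c j = e then (1 : ℕ) else 0 : ℕ) : ℤ) =
      ∑ j : Fin k, if c j = e then (1 : ℤ) else 0 := by
    intro e; push_cast; rfl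
  simp_rw [h, Finset.mul_sum, mul_ite, mul_one, mul_zero]
  rw [Finset.sum_comm]
  refine Finset.sum_congr rfl fun j _ => ?_
  rw [Finset.sum_ite_eq]; simp

lemma cycle_flow {k : ℕ} (hk : 0 < k) (src trg : E → V) (c : Fin k → E)
    (hcyc : ∀ j : Fin k, trg (c j) = src (c ⟨((j : ℕ) + 1) % k, Nat.mod_lt _ hk⟩)) (v : V) :
    ∑ e ∈ univ.filter (fun e => src e = v), (∑ j : Fin k, if c j = e then (1 : ℕ) else 0) =
    ∑ e ∈ univ.filter (fun e => trg e = v), (∑ j : Fin k, if c j = e then (1 : ℕ) else 0) := by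
  rw [filter_cycle_sum c (fun e => src e = v), filter_cycle_sum c (fun e => trg e = v)]
  have h : ∀ j : Fin k, (if trg (c j) = v then (1 : ℕ) else 0) =
      (fun j : Fin k => if src (c j) = v then (1 : ℕ) else 0)
        ⟨((j : ℕ) + 1) % k, Nat.mod_lt _ hk⟩ := by
    intro j; simp only [hcyc j]
  simp_rw [h]
  exact (rot_sum hk fun j : Fin k => if src (c j) = v then (1 : ℕ) else 0).symm

end DE

lemma exists_simple_cycle (src trg : E → V) (x : E → ℕ)
    (h1 : 1 ≤ ∑ e, x e)
    (hcons : ∀ v, ∑ e ∈ Finset.univ.filter (fun e => src e = v), x e =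
      ∑ e ∈ Finset.univ.filter (fun e => trg e = v), x e) :
    ∃ (k : ℕ) (hk : 0 < k) (c : Fin k → E),
      (∀ j : Fin k, trg (c j) = src (c ⟨((j : ℕ) + 1) % k, Nat.mod_lt _ hk⟩)) ∧
      (∀ j : Fin k, 1 ≤ x (c j)) ∧ Function.Injective c := by
  classical
  -- a starting edge in the support
  have he0 : ∃ e, 1 ≤ x e := by
    by_contra h
    push_neg at h
    have h0 : ∑ e, x e = 0 := Finset.sum_eq_zero fun e _ => by
      have := h e; omega
    omega
  obtain ⟨e0, he0⟩ := he0
  -- every support edge can be continued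
  have step : ∀ e : E, 1 ≤ x e → ∃ e', src e' = trg e ∧ 1 ≤ x e' := by
    intro e he
    have hin : 1 ≤ ∑ e' ∈ Finset.univ.filter (fun e' => trg e' = trg e), x e' :=
      le_trans he (Finset.single_le_sum (fun _ _ => Nat.zero_le _) (by simp))
    rw [← hcons (trg e)] at hin
    have hne : ∑ e' ∈ Finset.univ.filter (fun e' => src e' = trg e), x e' ≠ 0 := by omega
    obtain ⟨e', he'mem, he'⟩ := Finset.exists_ne_zero_of_sum_ne_zero hne
    simp only [Finset.mem_filter, Finset.mem_univ, true_and] at he'mem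
    exact ⟨e', he'mem, by omega⟩
  -- build an infinite walk in the support
  let F : {e // 1 ≤ x e} → {e // 1 ≤ x e} := fun p =>
    ⟨(step p.1 p.2).choose, (step p.1 p.2).choose_spec.2⟩
  have hF : ∀ p, src (F p).1 = trg p.1 := fun p => (step p.1 p.2).choose_spec.1
  let f : ℕ → E := fun n => (F^[n] ⟨e0, he0⟩).1
  have hf1 : ∀ n, 1 ≤ x (f n) := fun n => (F^[n] ⟨e0, he0⟩).2
  have hf2 : ∀ n, src (f (n + 1)) = trg (f n) := by
    intro n
    have := hF (F^[n] ⟨e0, he0⟩)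
    simpa [f, Function.iterate_succ_apply'] using this
  set g : ℕ → V := fun n => src (f n) with hg
  -- pigeonhole: some vertex repeats
  obtain ⟨a, b, hab, hgab⟩ := Finite.exists_ne_map_eq_of_infinite g
  have hQ : ∃ p, ∃ i, i < p ∧ g i = g p := by
    rcases Nat.lt_or_ge a b with h | h
    · exact ⟨b, a, h, hgab⟩
    · exact ⟨a, b, by omega, hgab.symm⟩
  set j := Nat.find hQ with hj
  obtain ⟨i, hij, hgij⟩ := Nat.find_spec hQ
  have hmin : ∀ p, p < j → ¬ ∃ i, i < p ∧ g i = g p := fun p hp => Nat.find_min hQ hp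
  set k := j - i with hkdef
  have hk : 0 < k := by omega
  refine ⟨k, hk, fun m => f (i + m.val), ?_, fun m => hf1 _, ?_⟩
  · intro m
    have hm := m.isLt
    have hstep : trg (f (i + m.val)) = src (f (i + m.val + 1)) := (hf2 (i + m.val)).symm
    by_cases h : m.val + 1 < k
    · have hmod : (m.val + 1) % k = m.val + 1 := Nat.mod_eq_of_lt h
      simp only [hmod]
      rw [hstep]
      have : i + (m.val + 1) = i + m.val + 1 := by omega
      rw [this]
    · have hmk : m.val + 1 = k := by omega
      have hmod : (m.val + 1) % k = 0 := by rw [hmk, Nat.mod_self]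
      simp only [hmod]
      rw [hstep]
      have h1 : i + m.val + 1 = j := by omega
      have h2 : i + 0 = i := by omega
      rw [h1, h2]
      exact hgij.symm
  · -- injectivity
    have key : ∀ a b : Fin k, a.val < b.val → g (i + a.val) ≠ g (i + b.val) := by
      intro a b hab' hgeq
      have hbk := b.isLt
      have hbj : i + b.val < j := by omega
      exact hmin (i + b.val) hbj ⟨i + a.val, by omega, hgeq⟩
    intro a b h
    by_contra hne
    have hval : a.val ≠ b.val := fun hv => hne (Fin.ext hv)
    have hgeq : g (i + a.val) = g (i + b.val) := by
      have h' : f (i + a.val) = f (i + b.val) := h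
      simp only [hg, h']
    rcases Nat.lt_or_ge a.val b.val with h' | h'
    · exact key a b h' hgeq
    · exact key b a (by omega) hgeq.symm

lemma hard_dir (src trg : E → V) (w : V → ℤ) :
    ∀ n : ℕ, ∀ x : E → ℕ, ∑ e, x e = n → 1 ≤ ∑ e, x e →
      (∀ v, ∑ e ∈ Finset.univ.filter (fun e => src e = v), x e =
        ∑ e ∈ Finset.univ.filter (fun e => trg e = v), x e) →
      0 ≤ ∑ e, w (src e) * (x e : ℤ) →
      ∃ (k : ℕ) (hk : 0 < k) (c : Fin k → E),
        (∀ j : Fin k, trg (c j) = src (c ⟨((j : ℕ) + 1) % k, Nat.mod_lt _ hk⟩)) ∧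
        0 ≤ ∑ j : Fin k, w (src (c j)) := by
  classical
  intro n
  induction n using Nat.strong_induction_on with
  | _ n ih =>
    intro x hn h1 hcons hS
    obtain ⟨k, hk, c, hcyc, hxc, hinj⟩ := exists_simple_cycle src trg x h1 hcons
    by_cases hW : 0 ≤ ∑ j : Fin k, w (src (c j))
    · exact ⟨k, hk, c, hcyc, hW⟩
    push_neg at hW
    -- indicator of the simple cycle
    set y : E → ℕ := fun e => ∑ j : Fin k, if c j = e then 1 else 0 with hy
    have hy1 : ∀ e, y e ≤ 1 := by
      intro e
      have hcard : y e = (univ.filter fun j : Fin k => c j = e).card := by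
        rw [hy]; exact (Finset.card_filter _ _).symm
      rw [hcard]
      apply Finset.card_le_one.mpr
      intro a ha b hb
      simp only [Finset.mem_filter, Finset.mem_univ, true_and] at ha hb
      exact hinj (ha.trans hb.symm)
    have hyx : ∀ e, y e ≤ x e := by
      intro e
      rcases Nat.eq_zero_or_pos (y e) with h | h
      · omega
      · have hex : ∃ j, c j = e := by
          by_contra hno
          push_neg at hno
          have : y e = 0 := by
            rw [hy]; exact Finset.sum_eq_zero fun j _ => if_neg (hno j)
          omega
        obtain ⟨j, hj⟩ := hex
        have := hxc j
        rw [hj] at this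
        have := hy1 e
        omega
    set x' : E → ℕ := fun e => x e - y e with hx'
    have hcast : ∀ e, (x' e : ℤ) = (x e : ℤ) - (y e : ℤ) := fun e => Nat.cast_sub (hyx e)
    have hyk : ∑ e, y e = k := cycle_total c
    have hsum' : ∑ e, x' e = n - k := by
      have hadd : ∑ e, x' e + ∑ e, y e = ∑ e, x e := by
        rw [← Finset.sum_add_distrib]
        exact Finset.sum_congr rfl fun e _ => by
          have h := hyx e
          simp only [hx']
          omega
      have hle : ∑ e, y e ≤ ∑ e, x e := Finset.sum_le_sum fun e _ => hyx e
      omega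
    have hkn : k ≤ n := by
      have hle : ∑ e, y e ≤ ∑ e, x e := Finset.sum_le_sum fun e _ => hyx e
      omega
    -- weighted sums
    have hwy : ∑ e, w (src e) * ((y e : ℕ) : ℤ) = ∑ j : Fin k, w (src (c j)) :=
      cycle_wsum c (fun e => w (src e))
    have hSsplit : ∑ e, w (src e) * (x e : ℤ) =
        ∑ e, w (src e) * (x' e : ℤ) + ∑ j : Fin k, w (src (c j)) := by
      rw [← hwy, ← Finset.sum_add_distrib]
      refine Finset.sum_congr rfl fun e _ => ?_
      rw [hcast]; ring
    have hS' : 0 < ∑ e, w (src e) * (x' e : ℤ) := by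
      rw [hSsplit] at hS
      linarith
    -- flow conservation of x'
    have hcons' : ∀ v, ∑ e ∈ Finset.univ.filter (fun e => src e = v), x' e =
        ∑ e ∈ Finset.univ.filter (fun e => trg e = v), x' e := by
      intro v
      have hyv := cycle_flow hk src trg c hcyc v
      have hs1 : ∑ e ∈ Finset.univ.filter (fun e => src e = v), x' e +
          ∑ e ∈ Finset.univ.filter (fun e => src e = v), y e =
          ∑ e ∈ Finset.univ.filter (fun e => src e = v), x e := by
        rw [← Finset.sum_add_distrib]
        exact Finset.sum_congr rfl fun e _ => by
          have h := hyx e; simp only [hx']; omega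
      have hs2 : ∑ e ∈ Finset.univ.filter (fun e => trg e = v), x' e +
          ∑ e ∈ Finset.univ.filter (fun e => trg e = v), y e =
          ∑ e ∈ Finset.univ.filter (fun e => trg e = v), x e := by
        rw [← Finset.sum_add_distrib]
        exact Finset.sum_congr rfl fun e _ => by
          have h := hyx e; simp only [hx']; omega
      have hxv := hcons v
      have hyv' : ∑ e ∈ Finset.univ.filter (fun e => src e = v), y e =
          ∑ e ∈ Finset.univ.filter (fun e => trg e = v), y e := hyv
      omega
    -- x' is nonzero
    have h1' : 1 ≤ ∑ e, x' e := by
      by_contra h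
      push_neg at h
      have hz : ∑ e, x' e = 0 := by omega
      have hze : ∀ e ∈ (univ : Finset E), x' e = 0 :=
        (Finset.sum_eq_zero_iff).mp hz
      have : ∑ e, w (src e) * (x' e : ℤ) = 0 :=
        Finset.sum_eq_zero fun e he => by rw [hze e he]; simp
      omega
    exact ih (n - k) (by omega) x' hsum' h1' hcons' (le_of_lt hS')

end AuxAll

/-- Correctness of the cycle linear program: in a finite directed graph with vertex
weights `w`, there is a nonzero circulation `x : E → ℕ` (flow conservation at every
vertex) with nonnegative total weighted sum iff the graph contains a cycle whose total
weight is nonnegative. -/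
theorem cycleLP_correct {V E : Type*} [Fintype V] [Fintype E] [DecidableEq V]
    (src trg : E → V) (w : V → ℤ) :
    (∃ x : E → ℕ,
        1 ≤ ∑ e, x e ∧
        (∀ v, ∑ e ∈ Finset.univ.filter (fun e => src e = v), x e =
          ∑ e ∈ Finset.univ.filter (fun e => trg e = v), x e) ∧
        0 ≤ ∑ e, w (src e) * (x e : ℤ)) ↔
      (∃ (k : ℕ) (hk : 0 < k) (c : Fin k → E),
        (∀ j : Fin k, trg (c j) = src (c ⟨((j : ℕ) + 1) % k, Nat.mod_lt _ hk⟩)) ∧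
        0 ≤ ∑ j : Fin k, w (src (c j))) := by
  classical
  constructor
  · rintro ⟨x, h1, hcons, hS⟩
    exact hard_dir src trg w (∑ e, x e) x rfl h1 hcons hS
  · rintro ⟨k, hk, c, hcyc, hW⟩
    refine ⟨fun e => ∑ j : Fin k, if c j = e then 1 else 0, ?_, ?_, ?_⟩
    · rw [cycle_total c]; omega
    · exact cycle_flow hk src trg c hcyc
    · rw [cycle_wsum c (fun e => w (src e))]
      exact hW
end
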